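/- Let x* ∈ X ⊆ ℝⁿ be an equilibrium of ẋ = f(x) (f continuously differentiable, X forward invariant, solutions defined for all t ≥ 0). Suppose there exists a sequence of global Lyapunov functions Vⁱ : X → ℝ≥0 for x* (i = 1, 2, …) that converges locally uniformly on X to V(x) := lim_{i→∞} Vⁱ(x). If V is positive definite (V(x) ≥ 0 with V(x) = 0 iff x = x*) and globally proper (every sublevel set {x ∈ X : V(x) ≤ L} is compact), then V is also a global Lyapunov function for x*. -/

import Mathlib

open Filter Topology

noncomputable section

/-- A solution of `ẋ = f(x)` with values in `X`, defined for all `t ≥ 0`. -/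
def IsSolution {n : ℕ} (f : (Fin n → ℝ) → (Fin n → ℝ)) (X : Set (Fin n → ℝ))
    (x : ℝ → (Fin n → ℝ)) : Prop :=
  (∀ t : ℝ, 0 ≤ t → x t ∈ X) ∧ ∀ t : ℝ, 0 ≤ t → HasDerivAt x (f (x t)) t

/-- A global Lyapunov function for the equilibrium `xs` of `ẋ = f(x)` on `X`. -/
def IsGlobalLyapunov {n : ℕ} (f : (Fin n → ℝ) → (Fin n → ℝ)) (X : Set (Fin n → ℝ))
    (xs : Fin n → ℝ) (V : (Fin n → ℝ) → ℝ) : Prop :=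
  ContinuousOn V X ∧
  (∀ x ∈ X, 0 ≤ V x) ∧
  (∀ x ∈ X, (V x = 0 ↔ x = xs)) ∧
  (∀ L : ℝ, IsCompact {x ∈ X | V x ≤ L}) ∧
  ∀ x : ℝ → (Fin n → ℝ), IsSolution f X x →
    AntitoneOn (fun t => V (x t)) (Set.Ici 0) ∧
    Tendsto (fun t => V (x t)) atTop (nhds 0)

/-- Global asymptotic stability of the equilibrium `xs` of `ẋ = f(x)` on `X`. -/
def IsGAS {n : ℕ} (f : (Fin n → ℝ) → (Fin n → ℝ)) (X : Set (Fin n → ℝ))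
    (xs : Fin n → ℝ) : Prop :=
  (∀ ε > (0 : ℝ), ∃ δ > (0 : ℝ), ∀ x : ℝ → (Fin n → ℝ), IsSolution f X x →
      ‖x 0 - xs‖ < δ → ∀ t ≥ (0 : ℝ), ‖x t - xs‖ < ε) ∧
  ∀ x : ℝ → (Fin n → ℝ), IsSolution f X x → Tendsto x atTop (nhds xs)


/-- Proposition: a locally uniform limit of global Lyapunov functions which is
positive definite and globally proper is itself a global Lyapunov function. -/
theorem prop_limit {n : ℕ}
    (X : Set (Fin n → ℝ))
    (f : (Fin n → ℝ) → (Fin n → ℝ)) (hf : ContDiffOn ℝ 1 f X)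
    (xs : Fin n → ℝ) (hxs : xs ∈ X) (heq : f xs = 0)
    -- a sequence of global Lyapunov functions
    (V : ℕ → (Fin n → ℝ) → ℝ)
    (hV : ∀ i, IsGlobalLyapunov f X xs (V i))
    -- converging locally uniformly on `X` to `Vlim`
    (Vlim : (Fin n → ℝ) → ℝ)
    (hconv : TendstoLocallyUniformlyOn V Vlim atTop X)
    -- `Vlim` is positive definite and globally proper
    (hnn : ∀ x ∈ X, 0 ≤ Vlim x)
    (hpd : ∀ x ∈ X, (Vlim x = 0 ↔ x = xs))
    (hproper : ∀ L : ℝ, IsCompact {x ∈ X | Vlim x ≤ L}) :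
    IsGlobalLyapunov f X xs Vlim := by
  have hcont : ContinuousOn Vlim X :=
    hconv.continuousOn (Filter.Eventually.of_forall fun i => (hV i).1).frequently
  refine ⟨hcont, hnn, hpd, hproper, fun x hx => ?_⟩
  have hmem : ∀ t : ℝ, 0 ≤ t → x t ∈ X := hx.1
  have hptw : ∀ t : ℝ, 0 ≤ t →
      Tendsto (fun i => V i (x t)) atTop (nhds (Vlim (x t))) :=
    fun t ht => hconv.tendsto_at (hmem t ht)
  have hanti : AntitoneOn (fun t => Vlim (x t)) (Set.Ici 0) := by
    intro s hs t ht hst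
    exact le_of_tendsto_of_tendsto' (hptw t ht) (hptw s hs)
      (fun i => ((hV i).2.2.2.2 x hx).1 hs ht hst)
  refine ⟨hanti, ?_⟩
  set L := Vlim (x 0) with hL
  have hK : IsCompact {p ∈ X | Vlim p ≤ L} := hproper L
  have huK : ∀ k : ℕ, x (k : ℝ) ∈ {p ∈ X | Vlim p ≤ L} := fun k =>
    ⟨hmem _ (Nat.cast_nonneg k),
      hanti (Set.mem_Ici.2 le_rfl) (Set.mem_Ici.2 (Nat.cast_nonneg k)) (Nat.cast_nonneg k)⟩
  obtain ⟨y, hy, φ, hφ, hyconv⟩ := hK.tendsto_subseq huK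
  have hyX : y ∈ X := hy.1
  have hφtop : Tendsto (fun k => ((φ k : ℕ) : ℝ)) atTop atTop :=
    tendsto_natCast_atTop_atTop.comp hφ.tendsto_atTop
  have hseqX : Tendsto (fun k => x ((φ k : ℕ) : ℝ)) atTop (nhdsWithin y X) :=
    tendsto_nhdsWithin_of_tendsto_nhds_of_eventually_within _ hyconv
      (Filter.Eventually.of_forall fun k => hmem _ (Nat.cast_nonneg _))
  have h1 : Tendsto (fun k => V 0 (x ((φ k : ℕ) : ℝ))) atTop (nhds 0) :=
    ((hV 0).2.2.2.2 x hx).2.comp hφtop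
  have h2 : Tendsto (fun k => V 0 (x ((φ k : ℕ) : ℝ))) atTop (nhds (V 0 y)) :=
    ((hV 0).1 y hyX).tendsto.comp hseqX
  have hy0 : V 0 y = 0 := tendsto_nhds_unique h2 h1
  have hyxs : y = xs := ((hV 0).2.2.1 y hyX).1 hy0
  have hVlimy : Vlim y = 0 := (hpd y hyX).2 hyxs
  have h3 : Tendsto (fun k => Vlim (x ((φ k : ℕ) : ℝ))) atTop (nhds 0) := by
    rw [← hVlimy]
    exact (hcont y hyX).tendsto.comp hseqX
  refine Metric.tendsto_atTop.2 fun ε hε => ?_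
  obtain ⟨N, hN⟩ := Metric.tendsto_atTop.1 h3 ε hε
  refine ⟨((φ N : ℕ) : ℝ), fun t ht => ?_⟩
  have hT0 : (0 : ℝ) ≤ ((φ N : ℕ) : ℝ) := Nat.cast_nonneg _
  have ht0 : (0 : ℝ) ≤ t := le_trans hT0 ht
  have h4 : Vlim (x t) ≤ Vlim (x ((φ N : ℕ) : ℝ)) :=
    hanti (Set.mem_Ici.2 hT0) (Set.mem_Ici.2 ht0) ht
  have h5 : dist (Vlim (x ((φ N : ℕ) : ℝ))) 0 < ε := hN N le_rfl
  rw [Real.dist_eq, sub_zero] at h5 ⊢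
  calc |Vlim (x t)| = Vlim (x t) := abs_of_nonneg (hnn _ (hmem t ht0))
    _ ≤ Vlim (x ((φ N : ℕ) : ℝ)) := h4
    _ ≤ |Vlim (x ((φ N : ℕ) : ℝ))| := le_abs_self _
    _ < ε := h5

end
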